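/- Let B be a finite collection of pairwise disjoint two-element subsets {i,j} of [1,N] with the nesting property: for any two distinct arcs ab, cd in B (written with the convention of ⌊·,·⌋), the sets ⌊a,b⌋ and ⌊c,d⌋ are either disjoint or nested. Let 𝒥 = [i,j] ⊆ [1,N] be an interval with |𝒥| ≡ e mod 2, e ∈ {0,1}, and suppose there exists a sequence a_1 < b_1 < a_2 < b_2 < ... < a_m < b_m in [1,N] with each a_r b_r ∈ B, each a_r < b_r with b_r − a_r odd, and 𝒥 = [a_1,b_1] ⊔ [a_2,b_2] ⊔ ... ⊔ [a_m,b_m] ⊔ 𝒥_0 where 𝒥_0 ⊆ 𝒥 and |𝒥_0| = e. Then the sequence a_1 < b_1 < ... < a_m < b_m is unique. -/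
import Mathlib


/-- `⌊i,j⌋ ⊆ [1,N]`: the interval `[i,j]` when `i < j`, and the wrap-around set
`[i,N] ∪ [1,j]` when `i > j`. -/
def arcSet (N i j : ℕ) : Finset ℕ :=
  if i < j then Finset.Icc i j else Finset.Icc i N ∪ Finset.Icc 1 j

/-- `(m, a, b)` is an `e`-covering datum of the interval `J` by the arcs of
`B`: the arcs `(a r, b r)` for `r ∈ [1,m]` lie in `B¹` (first entry smaller),
form a strictly interleaved chain `a 1 < b 1 < a 2 < ⋯ < a m < b m`, and `J`
is the disjoint union of the intervals `[a r, b r]` together with a set `J₀ ⊆ J`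
of cardinality `e`. -/
def IsCoverDatum (B : Finset (ℕ × ℕ)) (J : Finset ℕ) (e m : ℕ) (a b : ℕ → ℕ) : Prop :=
  (∀ r, 1 ≤ r → r ≤ m → (a r, b r) ∈ B ∧ a r < b r) ∧
  (∀ r, 1 ≤ r → r < m → b r < a (r + 1)) ∧
  ∃ J0 : Finset ℕ, J0 ⊆ J ∧ J0.card = e ∧
    (∀ r, 1 ≤ r → r ≤ m → Disjoint (Finset.Icc (a r) (b r)) J0) ∧
    J = ((Finset.Icc 1 m).biUnion fun r => Finset.Icc (a r) (b r)) ∪ J0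

namespace Stmt14Aux

/-- In an interleaved chain, `b r < a s` whenever `r < s ≤ m`. -/
lemma chain_lt {m : ℕ} {a b : ℕ → ℕ}
    (hab : ∀ r, 1 ≤ r → r ≤ m → a r < b r)
    (hch : ∀ r, 1 ≤ r → r < m → b r < a (r + 1)) :
    ∀ r s, 1 ≤ r → r < s → s ≤ m → b r < a s := by
  intro r s
  induction s with
  | zero => omega
  | succ t ih =>
    intro hr hrs hsm
    rcases Nat.lt_or_ge r t with h | h
    · have h1 : b r < a t := ih hr h (by omega)
      have h2 : a t < b t := hab t (by omega) (by omega)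
      have h3 : b t < a (t + 1) := hch t (by omega) (by omega)
      omega
    · have hrt : r = t := by omega
      subst hrt
      exact hch r hr (by omega)

/-- The union of the tail of a chain is the part of the full union above `b 1`. -/
lemma tail_union {k : ℕ} {a b : ℕ → ℕ}
    (hab : ∀ r, 1 ≤ r → r ≤ k + 1 → a r < b r)
    (hch : ∀ r, 1 ≤ r → r < k + 1 → b r < a (r + 1)) :
    ((Finset.Icc 1 k).biUnion fun r => Finset.Icc (a (r + 1)) (b (r + 1))) =
      (((Finset.Icc 1 (k + 1)).biUnion fun r => Finset.Icc (a r) (b r))).filter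
        (fun x => b 1 < x) := by
  ext x
  simp only [Finset.mem_biUnion, Finset.mem_Icc, Finset.mem_filter]
  constructor
  · rintro ⟨r, ⟨hr1, hrk⟩, hx1, hx2⟩
    refine ⟨⟨r + 1, ⟨by omega, by omega⟩, hx1, hx2⟩, ?_⟩
    have : b 1 < a (r + 1) := chain_lt hab hch 1 (r + 1) le_rfl (by omega) (by omega)
    omega
  · rintro ⟨⟨r, ⟨hr1, hrk⟩, hx1, hx2⟩, hbx⟩
    have hr2 : 2 ≤ r := by
      by_contra h
      have : r = 1 := by omega
      subst this; omega
    obtain ⟨t, rfl⟩ : ∃ t, r = t + 1 := ⟨r - 1, by omega⟩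
    exact ⟨t, ⟨by omega, by omega⟩, hx1, hx2⟩

/-- Two interleaved chains of arcs of `B` with the same union coincide. -/
lemma chains_unique (B : Finset (ℕ × ℕ))
    (hBdisj : ∀ p ∈ B, ∀ q ∈ B, p ≠ q →
      ({p.1, p.2} : Finset ℕ) ∩ {q.1, q.2} = ∅) :
    ∀ m m' (a b a' b' : ℕ → ℕ),
    (∀ r, 1 ≤ r → r ≤ m → (a r, b r) ∈ B ∧ a r < b r) →
    (∀ r, 1 ≤ r → r < m → b r < a (r + 1)) →
    (∀ r, 1 ≤ r → r ≤ m' → (a' r, b' r) ∈ B ∧ a' r < b' r) →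
    (∀ r, 1 ≤ r → r < m' → b' r < a' (r + 1)) →
    ((Finset.Icc 1 m).biUnion fun r => Finset.Icc (a r) (b r)) =
      ((Finset.Icc 1 m').biUnion fun r => Finset.Icc (a' r) (b' r)) →
    m = m' ∧ ∀ r, 1 ≤ r → r ≤ m → a r = a' r ∧ b r = b' r := by
  intro m
  induction m with
  | zero =>
    intro m' a b a' b' _ _ H2 _ hU
    have hm' : m' = 0 := by
      by_contra h
      have h1 : a' 1 ∈ ((Finset.Icc 1 m').biUnion fun r => Finset.Icc (a' r) (b' r)) := by
        refine Finset.mem_biUnion.2 ⟨1, Finset.mem_Icc.2 ⟨le_rfl, by omega⟩, ?_⟩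
        exact Finset.mem_Icc.2 ⟨le_rfl, (H2 1 le_rfl (by omega)).2.le⟩
      rw [← hU] at h1
      simp at h1
    exact ⟨hm'.symm, fun r hr1 hr0 => by omega⟩
  | succ k ih =>
    intro m' a b a' b' H1 C1 H2 C2 hU
    -- m' ≥ 1
    have hm'pos : 1 ≤ m' := by
      by_contra h
      have hm0 : m' = 0 := by omega
      subst hm0
      have h1 : a 1 ∈ ((Finset.Icc 1 (k + 1)).biUnion fun r => Finset.Icc (a r) (b r)) := by
        refine Finset.mem_biUnion.2 ⟨1, Finset.mem_Icc.2 ⟨le_rfl, by omega⟩, ?_⟩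
        exact Finset.mem_Icc.2 ⟨le_rfl, (H1 1 le_rfl (by omega)).2.le⟩
      rw [hU] at h1
      simp at h1
    obtain ⟨k', rfl⟩ : ∃ k', m' = k' + 1 := ⟨m' - 1, by omega⟩
    -- a 1 is the minimum of the union, likewise a' 1
    have hmin : ∀ x ∈ ((Finset.Icc 1 (k + 1)).biUnion fun r => Finset.Icc (a r) (b r)),
        a 1 ≤ x := by
      intro x hx
      obtain ⟨r, hr, hxr⟩ := Finset.mem_biUnion.1 hx
      rw [Finset.mem_Icc] at hr hxr
      rcases Nat.eq_or_lt_of_le hr.1 with h | h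
      · subst h; omega
      · have := chain_lt (fun t h1 h2 => (H1 t h1 h2).2) C1 1 r le_rfl (by omega) hr.2
        have := (H1 1 le_rfl (by omega)).2
        omega
    have hmin' : ∀ x ∈ ((Finset.Icc 1 (k' + 1)).biUnion fun r => Finset.Icc (a' r) (b' r)),
        a' 1 ≤ x := by
      intro x hx
      obtain ⟨r, hr, hxr⟩ := Finset.mem_biUnion.1 hx
      rw [Finset.mem_Icc] at hr hxr
      rcases Nat.eq_or_lt_of_le hr.1 with h | h
      · subst h; omega
      · have := chain_lt (fun t h1 h2 => (H2 t h1 h2).2) C2 1 r le_rfl (by omega) hr.2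
        have := (H2 1 le_rfl (by omega)).2
        omega
    have ha1mem : a 1 ∈ ((Finset.Icc 1 (k + 1)).biUnion fun r => Finset.Icc (a r) (b r)) := by
      refine Finset.mem_biUnion.2 ⟨1, Finset.mem_Icc.2 ⟨le_rfl, by omega⟩, ?_⟩
      exact Finset.mem_Icc.2 ⟨le_rfl, (H1 1 le_rfl (by omega)).2.le⟩
    have ha1mem' : a' 1 ∈ ((Finset.Icc 1 (k' + 1)).biUnion fun r => Finset.Icc (a' r) (b' r)) := by
      refine Finset.mem_biUnion.2 ⟨1, Finset.mem_Icc.2 ⟨le_rfl, by omega⟩, ?_⟩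
      exact Finset.mem_Icc.2 ⟨le_rfl, (H2 1 le_rfl (by omega)).2.le⟩
    have ha : a 1 = a' 1 := by
      have h1 : a 1 ≤ a' 1 := hmin _ (by rw [hU]; exact ha1mem')
      have h2 : a' 1 ≤ a 1 := hmin' _ (by rw [← hU]; exact ha1mem)
      omega
    -- b 1 = b' 1 via shared endpoint
    have hb : b 1 = b' 1 := by
      by_contra hne
      have hpq : ((a 1, b 1) : ℕ × ℕ) ≠ (a' 1, b' 1) := by
        intro h
        rw [Prod.ext_iff] at h
        exact hne h.2
      have := hBdisj _ (H1 1 le_rfl (by omega)).1 _ (H2 1 le_rfl (by omega)).1 hpq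
      have hmem : a 1 ∈ ({a 1, b 1} : Finset ℕ) ∩ {a' 1, b' 1} := by
        rw [Finset.mem_inter]
        constructor
        · simp
        · rw [ha]; simp
      rw [this] at hmem
      simp at hmem
    -- tails coincide
    have hUt : ((Finset.Icc 1 k).biUnion fun r => Finset.Icc (a (r + 1)) (b (r + 1))) =
        ((Finset.Icc 1 k').biUnion fun r => Finset.Icc (a' (r + 1)) (b' (r + 1))) := by
      rw [tail_union (fun t h1 h2 => (H1 t h1 h2).2) C1, tail_union (fun t h1 h2 => (H2 t h1 h2).2) C2, hU, hb]
    have ihres := ih k' (fun r => a (r + 1)) (fun r => b (r + 1))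
      (fun r => a' (r + 1)) (fun r => b' (r + 1))
      (fun r hr1 hrk => H1 (r + 1) (by omega) (by omega))
      (fun r hr1 hrk => C1 (r + 1) (by omega) (by omega))
      (fun r hr1 hrk => H2 (r + 1) (by omega) (by omega))
      (fun r hr1 hrk => C2 (r + 1) (by omega) (by omega))
      hUt
    refine ⟨by omega, ?_⟩
    intro r hr1 hrm
    rcases Nat.eq_or_lt_of_le hr1 with h | h
    · rw [← h]; exact ⟨ha, hb⟩
    · obtain ⟨t, rfl⟩ : ∃ t, r = t + 1 := ⟨r - 1, by omega⟩
      exact ihres.2 t (by omega) (by omega)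

end Stmt14Aux

/-- let `B` be a finite collection of arcs `(i,j)` in `[1,N]`
(pairwise disjoint two-element subsets, each of the first kind `i<j`, `j−i` odd,
or of the second kind `i>j`, `i ≡ j mod 2`) whose associated sets `⌊i,j⌋` are
pairwise disjoint or nested. If an interval `J = [i,j] ⊆ [1,N]` with
`|J| ≡ e (mod 2)`, `e ∈ {0,1}`, admits an `e`-covering datum by `B`, then the
chain `a 1 < b 1 < ⋯ < a m < b m` is unique: any two such data agree. -/
theorem stmt14 (N : ℕ) (hN : Odd N) (B : Finset (ℕ × ℕ))
    (hBmem : ∀ p ∈ B, 1 ≤ p.1 ∧ p.1 ≤ N ∧ 1 ≤ p.2 ∧ p.2 ≤ N ∧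
      ((p.1 < p.2 ∧ (p.2 - p.1) % 2 = 1) ∨ (p.2 < p.1 ∧ p.1 % 2 = p.2 % 2)))
    (hBdisj : ∀ p ∈ B, ∀ q ∈ B, p ≠ q →
      ({p.1, p.2} : Finset ℕ) ∩ {q.1, q.2} = ∅)
    (hBnest : ∀ p ∈ B, ∀ q ∈ B, p ≠ q →
      arcSet N p.1 p.2 ∩ arcSet N q.1 q.2 = ∅ ∨
      arcSet N p.1 p.2 ⊆ arcSet N q.1 q.2 ∨
      arcSet N q.1 q.2 ⊆ arcSet N p.1 p.2)
    (i j : ℕ) (hi : 1 ≤ i) (hij : i ≤ j) (hjN : j ≤ N)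
    (e : ℕ) (he : e = (Finset.Icc i j).card % 2)
    (m m' : ℕ) (a b a' b' : ℕ → ℕ)
    (h1 : IsCoverDatum B (Finset.Icc i j) e m a b)
    (h2 : IsCoverDatum B (Finset.Icc i j) e m' a' b') :
    m = m' ∧ ∀ r, 1 ≤ r → r ≤ m → a r = a' r ∧ b r = b' r := by
  obtain ⟨H1, C1, J0, hJ0sub, hJ0card, hdisj1, hJeq1⟩ := h1
  obtain ⟨H2, C2, J0', hJ0sub', hJ0card', hdisj2, hJeq2⟩ := h2
  set J : Finset ℕ := Finset.Icc i j with hJ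
  set U1 : Finset ℕ := (Finset.Icc 1 m).biUnion fun r => Finset.Icc (a r) (b r) with hU1
  set U2 : Finset ℕ := (Finset.Icc 1 m').biUnion fun r => Finset.Icc (a' r) (b' r) with hU2
  have hdU1 : Disjoint U1 J0 := by
    rw [hU1, Finset.disjoint_biUnion_left]
    intro r hr
    rw [Finset.mem_Icc] at hr
    exact hdisj1 r hr.1 hr.2
  have hdU2 : Disjoint U2 J0' := by
    rw [hU2, Finset.disjoint_biUnion_left]
    intro r hr
    rw [Finset.mem_Icc] at hr
    exact hdisj2 r hr.1 hr.2
  have hU1eq : U1 = J \ J0 := by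
    rw [hJeq1, Finset.union_sdiff_right, Finset.sdiff_eq_self_iff_disjoint.2 hdU1]
  have hU2eq : U2 = J \ J0' := by
    rw [hJeq2, Finset.union_sdiff_right, Finset.sdiff_eq_self_iff_disjoint.2 hdU2]
  -- key claim: J0 = J0'
  have hJ0eq : J0 = J0' := by
    rcases Nat.mod_two_eq_zero_or_one ((Finset.Icc i j).card) with hpar | hpar
    · have h0 : e = 0 := by rw [he, hpar]
      rw [Finset.card_eq_zero.1 (hJ0card.trans h0),
        Finset.card_eq_zero.1 (hJ0card'.trans h0)]
    · have h0 : e = 1 := by rw [he, hpar]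
      obtain ⟨c, rfl⟩ := Finset.card_eq_one.1 (by rw [hJ0card, h0])
      obtain ⟨c', rfl⟩ := Finset.card_eq_one.1 (by rw [hJ0card', h0])
      suffices hcc : c = c' by rw [hcc]
      by_contra hne
      -- c lies in U2
      have hcJ : c ∈ J := hJ0sub (Finset.mem_singleton_self c)
      have hcU2 : c ∈ U2 := by
        rw [hU2eq, Finset.mem_sdiff]
        exact ⟨hcJ, by simp [hne]⟩
      obtain ⟨s, hs, hcs⟩ := Finset.mem_biUnion.1 hcU2
      rw [Finset.mem_Icc] at hs
      have hs' := H2 s hs.1 hs.2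
      rw [Finset.mem_Icc] at hcs
      -- pick x ∈ {a' s, b' s} with x ≠ c
      obtain ⟨x, hx, hxne⟩ : ∃ x, (x = a' s ∨ x = b' s) ∧ x ≠ c := by
        rcases eq_or_ne (a' s) c with h | h
        · exact ⟨b' s, Or.inr rfl, by omega⟩
        · exact ⟨a' s, Or.inl rfl, h⟩
      have hxIcc : x ∈ Finset.Icc (a' s) (b' s) := by
        rw [Finset.mem_Icc]; omega
      have hxU2 : x ∈ U2 := Finset.mem_biUnion.2 ⟨s, Finset.mem_Icc.2 hs, hxIcc⟩
      have hxJ : x ∈ J := by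
        rw [hU2eq, Finset.mem_sdiff] at hxU2; exact hxU2.1
      have hxU1 : x ∈ U1 := by
        rw [hU1eq, Finset.mem_sdiff]
        exact ⟨hxJ, by simp [hxne]⟩
      obtain ⟨r, hr, hxr⟩ := Finset.mem_biUnion.1 hxU1
      rw [Finset.mem_Icc] at hr
      have hr' := H1 r hr.1 hr.2
      rw [Finset.mem_Icc] at hxr
      -- c not in [a r, b r]
      have hcnr : c ∉ Finset.Icc (a r) (b r) := by
        intro h
        exact (Finset.disjoint_left.1 (hdisj1 r hr.1 hr.2)) h (Finset.mem_singleton_self c)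
      -- the two arcs are distinct
      have hpq : ((a r, b r) : ℕ × ℕ) ≠ (a' s, b' s) := by
        intro h
        simp only [Prod.mk.injEq] at h
        apply hcnr
        rw [Finset.mem_Icc, h.1, h.2]
        omega
      -- endpoints distinct
      have hend := hBdisj _ hr'.1 _ hs'.1 hpq
      have hend1 : a r ≠ a' s := by
        intro h
        have : a r ∈ ({a r, b r} : Finset ℕ) ∩ {a' s, b' s} := by
          rw [Finset.mem_inter]; constructor
          · simp
          · rw [h]; simp
        rw [hend] at this; simp at this
      have hend2 : b r ≠ b' s := by
        intro h
        have : b r ∈ ({a r, b r} : Finset ℕ) ∩ {a' s, b' s} := by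
          rw [Finset.mem_inter]; constructor
          · simp
          · rw [h]; simp
        rw [hend] at this; simp at this
      -- nesting
      have hnest := hBnest _ hr'.1 _ hs'.1 hpq
      have harc1 : arcSet N (a r, b r).1 (a r, b r).2 = Finset.Icc (a r) (b r) := by
        show arcSet N (a r) (b r) = _
        unfold arcSet
        rw [if_pos hr'.2]
      have harc2 : arcSet N (a' s, b' s).1 (a' s, b' s).2 = Finset.Icc (a' s) (b' s) := by
        show arcSet N (a' s) (b' s) = _
        unfold arcSet
        rw [if_pos hs'.2]
      rw [harc1, harc2] at hnest
      rcases hnest with hd | hsub | hsub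
      · have : x ∈ Finset.Icc (a r) (b r) ∩ Finset.Icc (a' s) (b' s) :=
          Finset.mem_inter.2 ⟨Finset.mem_Icc.2 ⟨hxr.1, hxr.2⟩, hxIcc⟩
        rw [hd] at this; simp at this
      · -- [a r, b r] ⊆ [a' s, b' s]
        have h1 := Finset.mem_Icc.1 (hsub (Finset.mem_Icc.2 ⟨le_rfl, hr'.2.le⟩))
        have h2 := Finset.mem_Icc.1 (hsub (Finset.mem_Icc.2 ⟨hr'.2.le, le_rfl⟩))
        omega
      · -- [a' s, b' s] ⊆ [a r, b r]
        exact hcnr (hsub (Finset.mem_Icc.2 hcs))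
  -- unions equal, apply chains_unique
  have hUeq : U1 = U2 := by rw [hU1eq, hU2eq, hJ0eq]
  exact Stmt14Aux.chains_unique B hBdisj m m' a b a' b' H1 C1 H2 C2 hUeq
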